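/- arXiv:1001.0722 — 3 statements merged into one kernel-verified Lean document; each statement's English description precedes it below -/
import Mathlib

section
/- Let G be a finite group, let E and E' be finite-dimensional complex vector spaces carrying the trivial G-action, and let R and R' be irreducible finite-dimensional complex representations of G. Then every G-equivariant linear map L : E ⊗ R → E' ⊗ R' (where G acts as id ⊗ ρ_R on E ⊗ R and as id ⊗ ρ_{R'} on E' ⊗ R') is a pure tensor: there exist a linear map φ : E → E' and a G-equivariant linear map ψ : R → R' such that L = φ ⊗ ψ. -/
open TensorProduct

section helpers
set_option linter.unusedSectionVars false

noncomputable def sliceL {E' R' : Type} [AddCommGroup E'] [Module ℂ E']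
    [AddCommGroup R'] [Module ℂ R'] (f : E' →ₗ[ℂ] ℂ) :
    E' ⊗[ℂ] R' →ₗ[ℂ] R' :=
  (TensorProduct.lid ℂ R').toLinearMap ∘ₗ TensorProduct.map f LinearMap.id

@[simp] lemma sliceL_tmul {E' R' : Type} [AddCommGroup E'] [Module ℂ E']
    [AddCommGroup R'] [Module ℂ R'] (f : E' →ₗ[ℂ] ℂ) (x : E') (y : R') :
    sliceL f (x ⊗ₜ[ℂ] y) = f x • y := by
  simp [sliceL]

lemma sliceL_sum {E' R' : Type} [AddCommGroup E'] [Module ℂ E']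
    [AddCommGroup R'] [Module ℂ R'] {n : ℕ} (b : Module.Basis (Fin n) ℂ E')
    (z : E' ⊗[ℂ] R') :
    z = ∑ i, b i ⊗ₜ[ℂ] sliceL (b.coord i) z := by
  induction z using TensorProduct.induction_on with
  | zero => simp
  | tmul x y =>
      simp only [sliceL_tmul, Module.Basis.coord_apply]
      calc x ⊗ₜ[ℂ] y = (∑ i, b.repr x i • b i) ⊗ₜ[ℂ] y := by rw [Module.Basis.sum_repr]
        _ = ∑ i, (b.repr x i • b i) ⊗ₜ[ℂ] y := by rw [TensorProduct.sum_tmul]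
        _ = ∑ i, b i ⊗ₜ[ℂ] (b.repr x i • y) := by
              simp [TensorProduct.smul_tmul]
  | add u v hu hv =>
      conv_lhs => rw [hu, hv]
      simp [map_add, TensorProduct.tmul_add, Finset.sum_add_distrib]

end helpers

/-- A representation is irreducible if the space is nonzero and has no
invariant subspace other than `⊥` and `⊤`. -/
def Representation.IsIrreducible' {k G W : Type} [CommSemiring k] [Monoid G]
    [AddCommMonoid W] [Module k W] (ρ : Representation k G W) : Prop :=
  Nontrivial W ∧
    ∀ p : Submodule k W, (∀ (g : G) (x : W), x ∈ p → ρ g x ∈ p) → p = ⊥ ∨ p = ⊤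

section schur
set_option linter.unusedSectionVars false
variable {G : Type} [Group G]
variable {R R' : Type} [AddCommGroup R] [Module ℂ R] [FiniteDimensional ℂ R]
  [AddCommGroup R'] [Module ℂ R'] [FiniteDimensional ℂ R']
variable {ρR : Representation ℂ G R} {ρR' : Representation ℂ G R'}

lemma schur_zero_or_bij (hR : ρR.IsIrreducible') (hR' : ρR'.IsIrreducible')
    (ψ : R →ₗ[ℂ] R') (hψ : ∀ g, ψ ∘ₗ ρR g = ρR' g ∘ₗ ψ) :
    ψ = 0 ∨ Function.Bijective ψ := by
  by_cases h0 : ψ = 0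
  · exact Or.inl h0
  right
  have happ : ∀ g x, ψ (ρR g x) = ρR' g (ψ x) := fun g x =>
    congrArg (fun m => m x) (hψ g)
  have hker : LinearMap.ker ψ = ⊥ := by
    rcases hR.2 (LinearMap.ker ψ) (by
      intro g x hx
      simp only [LinearMap.mem_ker] at *
      rw [happ, hx, map_zero]) with h | h
    · exact h
    · exact absurd (LinearMap.ker_eq_top.mp h) h0
  have hrg : LinearMap.range ψ = ⊤ := by
    rcases hR'.2 (LinearMap.range ψ) (by
      rintro g x ⟨y, rfl⟩
      exact ⟨ρR g y, happ g y⟩) with h | h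
    · exact absurd (LinearMap.range_eq_bot.mp h) h0
    · exact h
  exact ⟨LinearMap.ker_eq_bot.mp hker, LinearMap.range_eq_top.mp hrg⟩

lemma schur_endo (hR : ρR.IsIrreducible')
    (η : R →ₗ[ℂ] R) (hη : ∀ g, η ∘ₗ ρR g = ρR g ∘ₗ η) :
    ∃ μ : ℂ, η = μ • LinearMap.id := by
  have : Nontrivial R := hR.1
  obtain ⟨μ, hμ⟩ := Module.End.exists_eigenvalue η
  obtain ⟨v, hv⟩ := hμ.exists_hasEigenvector
  refine ⟨μ, ?_⟩
  set η' : R →ₗ[ℂ] R := η - μ • LinearMap.id with hη'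
  have hker : ∀ g x, x ∈ LinearMap.ker η' → ρR g x ∈ LinearMap.ker η' := by
    intro g x hx
    have happ : ∀ x, η (ρR g x) = ρR g (η x) := fun x =>
      congrArg (fun m => m x) (hη g)
    simp only [LinearMap.mem_ker, hη', LinearMap.sub_apply, LinearMap.smul_apply,
      LinearMap.id_apply, sub_eq_zero] at *
    rw [happ, hx, map_smul]
  rcases hR.2 _ hker with h | h
  · exfalso
    have hv0 : v ∈ LinearMap.ker η' := by
      simp [hη', sub_eq_zero, hv.apply_eq_smul]
    rw [h] at hv0
    exact hv.2 (by simpa using hv0)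
  · have : η' = 0 := LinearMap.ker_eq_top.mp h
    have : η - μ • LinearMap.id = 0 := this
    exact sub_eq_zero.mp this

lemma schur_scalar (hR : ρR.IsIrreducible') (hR' : ρR'.IsIrreducible')
    (ψ₀ ψ : R →ₗ[ℂ] R') (hψ₀ : ∀ g, ψ₀ ∘ₗ ρR g = ρR' g ∘ₗ ψ₀)
    (hψ : ∀ g, ψ ∘ₗ ρR g = ρR' g ∘ₗ ψ) (h0 : ψ₀ ≠ 0) :
    ∃ μ : ℂ, ψ = μ • ψ₀ := by
  have hbij := (schur_zero_or_bij hR hR' ψ₀ hψ₀).resolve_left h0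
  set e := LinearEquiv.ofBijective ψ₀ hbij with he
  have hsymm : ∀ g (y : R'), e.symm (ρR' g y) = ρR g (e.symm y) := by
    intro g y
    apply e.injective
    have happ : ∀ x, ψ₀ (ρR g x) = ρR' g (ψ₀ x) := fun x =>
      congrArg (fun m => m x) (hψ₀ g)
    calc e (e.symm (ρR' g y)) = ρR' g y := e.apply_symm_apply _
      _ = ρR' g (e (e.symm y)) := by rw [e.apply_symm_apply]
      _ = e (ρR g (e.symm y)) := (happ _).symm
  have happψ : ∀ g x, ψ (ρR g x) = ρR' g (ψ x) := fun g x =>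
    congrArg (fun m => m x) (hψ g)
  obtain ⟨μ, hμ⟩ := schur_endo hR ((e.symm : R' →ₗ[ℂ] R) ∘ₗ ψ) (by
    intro g; ext x
    simp only [LinearMap.comp_apply, LinearEquiv.coe_coe]
    rw [happψ, hsymm])
  refine ⟨μ, ?_⟩
  ext x
  have h1 := congrArg (fun m => m x) hμ
  simp only [LinearMap.comp_apply, LinearEquiv.coe_coe, LinearMap.smul_apply,
    LinearMap.id_apply] at h1
  have h2 : ψ x = e (μ • x) := by
    rw [← h1, e.apply_symm_apply]
  rw [h2, map_smul]; rfl
end schur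

/-- If `R`, `R'` are irreducible representations of a finite
group `G` and `E`, `E'` carry the trivial `G`-action, then every
`G`-equivariant linear map `L : E ⊗ R → E' ⊗ R'` is a pure tensor
`L = φ ⊗ ψ` with `φ : E → E'` linear and `ψ : R → R'` equivariant. -/
theorem equivariant_map_is_pure_tensor
    {G : Type} [Group G] [Fintype G]
    {E E' R R' : Type}
    [AddCommGroup E] [Module ℂ E] [FiniteDimensional ℂ E]
    [AddCommGroup E'] [Module ℂ E'] [FiniteDimensional ℂ E']
    [AddCommGroup R] [Module ℂ R] [FiniteDimensional ℂ R]
    [AddCommGroup R'] [Module ℂ R'] [FiniteDimensional ℂ R']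
    (ρR : Representation ℂ G R) (ρR' : Representation ℂ G R')
    (hirrR : ρR.IsIrreducible') (hirrR' : ρR'.IsIrreducible')
    (L : E ⊗[ℂ] R →ₗ[ℂ] E' ⊗[ℂ] R')
    (hL : ∀ g : G,
      L ∘ₗ TensorProduct.map (LinearMap.id : E →ₗ[ℂ] E) (ρR g)
        = TensorProduct.map (LinearMap.id : E' →ₗ[ℂ] E') (ρR' g) ∘ₗ L) :
    ∃ (φ : E →ₗ[ℂ] E') (ψ : R →ₗ[ℂ] R'),
      (∀ g : G, ψ ∘ₗ ρR g = ρR' g ∘ₗ ψ) ∧ L = TensorProduct.map φ ψ := by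
  classical
  have hLapp : ∀ (g : G) (e : E) (r : R),
      L (e ⊗ₜ[ℂ] ρR g r) = TensorProduct.map LinearMap.id (ρR' g) (L (e ⊗ₜ[ℂ] r)) := by
    intro g e r
    have := congrArg (fun m => m (e ⊗ₜ[ℂ] r)) (hL g)
    simpa using this
  -- the slice maps
  set Ψ : (E' →ₗ[ℂ] ℂ) → E → (R →ₗ[ℂ] R') :=
    fun f e => sliceL f ∘ₗ L ∘ₗ TensorProduct.mk ℂ E R e with hΨ
  have hΨapp : ∀ f e r, Ψ f e r = sliceL f (L (e ⊗ₜ[ℂ] r)) := fun f e r => rfl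
  -- slices commute with the action
  have hscomm : ∀ (f : E' →ₗ[ℂ] ℂ) (g : G) (z : E' ⊗[ℂ] R'),
      sliceL f (TensorProduct.map LinearMap.id (ρR' g) z) = ρR' g (sliceL f z) := by
    intro f g z
    induction z using TensorProduct.induction_on with
    | zero => simp
    | tmul x y => simp
    | add u v hu hv => simp [map_add, hu, hv]
  have hΨequiv : ∀ f e, ∀ g, Ψ f e ∘ₗ ρR g = ρR' g ∘ₗ Ψ f e := by
    intro f e g
    ext r
    simp only [LinearMap.comp_apply, hΨapp]
    rw [hLapp, hscomm]
  -- basis of E'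
  set n := Module.finrank ℂ E'
  set b : Module.Basis (Fin n) ℂ E' := Module.finBasis ℂ E' with hb
  -- separation principle
  have hsep : ∀ z₁ z₂ : E' ⊗[ℂ] R',
      (∀ i, sliceL (b.coord i) z₁ = sliceL (b.coord i) z₂) → z₁ = z₂ := by
    intro z₁ z₂ h
    rw [sliceL_sum b z₁, sliceL_sum b z₂]
    exact Finset.sum_congr rfl fun i _ => by rw [h i]
  by_cases hz : ∀ (f : E' →ₗ[ℂ] ℂ) (e : E), Ψ f e = 0
  · -- L = 0
    refine ⟨0, 0, fun g => by simp, ?_⟩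
    have hm0 : (TensorProduct.map (0 : E →ₗ[ℂ] E') (0 : R →ₗ[ℂ] R')) = 0 := by
      apply TensorProduct.ext'
      intro e r
      simp
    rw [hm0]
    apply TensorProduct.ext'
    intro e r
    apply hsep
    intro i
    have := congrArg (fun m => m r) (hz (b.coord i) e)
    simpa [hΨapp] using this
  · push_neg at hz
    obtain ⟨f₀, e₀, hψ₀ne⟩ := hz
    set ψ₀ : R →ₗ[ℂ] R' := Ψ f₀ e₀ with hψ₀def
    have hψ₀eq := hΨequiv f₀ e₀
    -- pick r₀ with ψ₀ r₀ ≠ 0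
    have : ∃ r₀ : R, ψ₀ r₀ ≠ 0 := by
      by_contra hc
      push_neg at hc
      exact hψ₀ne (LinearMap.ext fun r => hc r)
    obtain ⟨r₀, hr₀⟩ := this
    -- functional g' on R' with g' (ψ₀ r₀) = 1
    obtain ⟨g', hg'⟩ : ∃ g' : R' →ₗ[ℂ] ℂ, g' (ψ₀ r₀) = 1 := by
      set m := Module.finrank ℂ R'
      set b' : Module.Basis (Fin m) ℂ R' := Module.finBasis ℂ R'
      have : ∃ i, b'.repr (ψ₀ r₀) i ≠ 0 := by
        by_contra hc
        push_neg at hc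
        apply hr₀
        have := b'.sum_repr (ψ₀ r₀)
        rw [← this]
        simp [hc]
      obtain ⟨i, hi⟩ := this
      refine ⟨(b'.repr (ψ₀ r₀) i)⁻¹ • b'.coord i, ?_⟩
      simp [Module.Basis.coord_apply, inv_mul_cancel₀ hi]
    -- scalar coefficient and its key property
    have hcoef : ∀ (f : E' →ₗ[ℂ] ℂ) (e : E),
        Ψ f e = (g' (Ψ f e r₀)) • ψ₀ := by
      intro f e
      obtain ⟨μ, hμ⟩ := schur_scalar hirrR hirrR' ψ₀ (Ψ f e) hψ₀eq (hΨequiv f e) hψ₀ne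
      have : g' (Ψ f e r₀) = μ := by
        rw [hμ]
        simp [map_smul, hg']
      rw [this, hμ]
    -- define φ
    set φ : E →ₗ[ℂ] E' :=
      { toFun := fun e => ∑ i, (g' (sliceL (b.coord i) (L (e ⊗ₜ[ℂ] r₀)))) • b i
        map_add' := by
          intro x y
          try dsimp only
          simp [TensorProduct.add_tmul, add_smul, Finset.sum_add_distrib]
        map_smul' := by
          intro c x
          try dsimp only
          rw [← TensorProduct.smul_tmul', map_smul, Finset.smul_sum]
          simp [map_smul, smul_smul] } with hφ
    have hφcoord : ∀ (e : E) (i : Fin n),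
        b.coord i (φ e) = g' (sliceL (b.coord i) (L (e ⊗ₜ[ℂ] r₀))) := by
      intro e i
      simp only [hφ, LinearMap.coe_mk, AddHom.coe_mk, map_sum, map_smul]
      rw [Finset.sum_eq_single i]
      · simp [Module.Basis.coord_apply, Module.Basis.repr_self]
      · intro j _ hj
        simp [Module.Basis.coord_apply, Module.Basis.repr_self, Finsupp.single_apply, hj]
      · intro h; exact absurd (Finset.mem_univ i) h
    refine ⟨φ, ψ₀, hψ₀eq, ?_⟩
    apply TensorProduct.ext'
    intro e r
    apply hsep
    intro i
    have h1 : sliceL (b.coord i) (L (e ⊗ₜ[ℂ] r)) = Ψ (b.coord i) e r := rfl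
    rw [h1, hcoef (b.coord i) e]
    simp only [TensorProduct.map_tmul, sliceL_tmul, LinearMap.smul_apply,
      hΨapp]
    rw [hφcoord]
end

section
/- Let V be a finite-dimensional complex inner product space and T : V → V an anti-unitary operator with T² = -id_V. Then the complex dimension of V is even, say dim V = 2m, and there exist vectors e_1, …, e_m in V such that (e_1, …, e_m, T e_1, …, T e_m) is an orthonormal basis of V. -/
open scoped InnerProductSpace ComplexConjugate
open Module Submodule

private lemma antiunitary_aux : ∀ n : ℕ, ∀ (V : Type) [NormedAddCommGroup V]
    [InnerProductSpace ℂ V] [FiniteDimensional ℂ V], Module.finrank ℂ V = n →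
    ∀ (T : V →ₗ⋆[ℂ] V), Function.Bijective T →
    (∀ v w : V, ⟪T v, T w⟫_ℂ = conj ⟪v, w⟫_ℂ) →
    (∀ v : V, T (T v) = -v) →
    ∃ m : ℕ, Module.finrank ℂ V = 2 * m ∧
      ∃ b : OrthonormalBasis (Fin m ⊕ Fin m) ℂ V,
        ∀ i : Fin m, b (Sum.inr i) = T (b (Sum.inl i)) := by
  intro n
  induction n using Nat.strong_induction_on with
  | _ n ih =>
  intro V _ _ _ hn T hTbij hTanti hT2
  rcases Nat.eq_zero_or_pos n with h0 | hpos
  · -- trivial case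
    subst h0
    have hsub : Subsingleton V := finrank_zero_iff.mp hn
    refine ⟨0, by simp [hn], ?_⟩
    have hb : Basis (Fin 0 ⊕ Fin 0) ℂ V := Basis.empty V
    have hon : Orthonormal ℂ (hb : (Fin 0 ⊕ Fin 0) → V) :=
      ⟨fun i => i.elim (fun x => x.elim0) (fun x => x.elim0),
       fun i => i.elim (fun x => x.elim0) (fun x => x.elim0)⟩
    exact ⟨hb.toOrthonormalBasis hon, fun i => i.elim0⟩
  · -- nontrivial case
    have hnt : Nontrivial V := finrank_pos_iff.mp (hn ▸ hpos)
    obtain ⟨v, hv⟩ := exists_ne (0 : V)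
    set e : V := (‖v‖⁻¹ : ℂ) • v with he_def
    have he1 : ‖e‖ = 1 := norm_smul_inv_norm hv
    have hee : ⟪e, e⟫_ℂ = 1 := by
      rw [inner_self_eq_norm_sq_to_K, he1]; norm_num
    have hTee : ⟪T e, T e⟫_ℂ = 1 := by rw [hTanti, hee]; simp
    have hTe1 : ‖T e‖ = 1 := by
      have := inner_self_eq_norm_sq_to_K (𝕜 := ℂ) (T e)
      rw [hTee] at this
      have h2 : (‖T e‖ : ℂ)^2 = 1 := this.symm
      have : ‖T e‖^2 = 1 := by exact_mod_cast h2
      nlinarith [norm_nonneg (T e)]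
    have hTee0 : ⟪T e, e⟫_ℂ = 0 := by
      have h := hTanti e (T e)
      rw [hT2, inner_neg_right, inner_conj_symm] at h
      have : (2 : ℂ) * ⟪T e, e⟫_ℂ = 0 := by linear_combination -h
      simpa using this
    have heTe : ⟪e, T e⟫_ℂ = 0 := by
      rw [← inner_conj_symm, hTee0]; simp
    -- the 2-dim subspace
    set f : Fin 2 → V := ![e, T e] with hf_def
    have honf : Orthonormal ℂ f := by
      rw [orthonormal_iff_ite]
      intro i j
      fin_cases i <;> fin_cases j <;>
        simp [hf_def, hee, hTee, heTe, hTee0, he1, hTe1]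
    set K : Submodule ℂ V := span ℂ (Set.range f) with hK_def
    have hK2 : finrank ℂ K = 2 := by
      rw [hK_def, finrank_span_eq_card honf.linearIndependent]
      simp
    set W : Submodule ℂ V := Kᗮ with hW_def
    have heK : e ∈ K := subset_span ⟨0, rfl⟩
    have hTeK : T e ∈ K := subset_span ⟨1, rfl⟩
    -- T maps W into W
    have hTW : ∀ w : V, w ∈ W → T w ∈ W := by
      intro w hw
      rw [hW_def, mem_orthogonal] at hw ⊢
      intro u hu
      rw [hK_def, hf_def] at hu
      have hu' := (mem_span_range_iff_exists_fun ℂ).mp hu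
      obtain ⟨c, rfl⟩ := hu'
      have hce : ⟪e, T w⟫_ℂ = 0 := by
        have : ⟪T (T e), T w⟫_ℂ = conj ⟪T e, w⟫_ℂ := hTanti _ _
        rw [hT2, inner_neg_left, hw _ hTeK] at this
        simpa using this
      have hcTe : ⟪T e, T w⟫_ℂ = 0 := by
        rw [hTanti, hw _ heK]; simp
      simp [Fin.sum_univ_two, inner_add_left, inner_smul_left, hce, hcTe]
    -- restriction of T to W
    let Tw : W →ₗ⋆[ℂ] W :=
      { toFun := fun w => ⟨T w, hTW w w.2⟩
        map_add' := fun x y => by ext; simp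
        map_smul' := fun c x => by ext; simp }
    have hTw_coe : ∀ w : W, (Tw w : V) = T w := fun w => rfl
    have hTw2 : ∀ w : W, Tw (Tw w) = -w := by
      intro w; ext
      simp only [hTw_coe, Submodule.coe_neg]
      exact hT2 w
    have hTwbij : Function.Bijective Tw := by
      constructor
      · intro x y hxy
        have := congrArg Tw hxy
        rw [hTw2, hTw2] at this
        exact neg_injective this
      · intro w
        exact ⟨-Tw w, by rw [map_neg, hTw2, neg_neg]⟩
    have hTwanti : ∀ x y : W, ⟪Tw x, Tw y⟫_ℂ = conj ⟪x, y⟫_ℂ := by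
      intro x y
      rw [Submodule.coe_inner, Submodule.coe_inner, hTw_coe, hTw_coe]
      exact hTanti x y
    -- dimension count
    have hdim := Submodule.finrank_add_finrank_orthogonal (K := K)
    rw [hK2, ← hW_def] at hdim
    have hlt : finrank ℂ W < n := by omega
    obtain ⟨m', hm', b', hb'⟩ := ih (finrank ℂ W) hlt W rfl Tw hTwbij hTwanti hTw2
    -- the combined family
    set g : Fin (m' + 1) ⊕ Fin (m' + 1) → V :=
      Sum.elim (fun i => Fin.cases e (fun j => (b' (Sum.inl j) : V)) i)
               (fun i => Fin.cases (T e) (fun j => (b' (Sum.inr j) : V)) i) with hg_def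
    have hEb : ∀ p, ⟪e, (b' p : V)⟫_ℂ = 0 := fun p =>
      Submodule.inner_right_of_mem_orthogonal heK (SetLike.coe_mem (b' p))
    have hbE : ∀ p, ⟪(b' p : V), e⟫_ℂ = 0 := fun p =>
      Submodule.inner_left_of_mem_orthogonal heK (SetLike.coe_mem (b' p))
    have hTb : ∀ p, ⟪T e, (b' p : V)⟫_ℂ = 0 := fun p =>
      Submodule.inner_right_of_mem_orthogonal hTeK (SetLike.coe_mem (b' p))
    have hbT : ∀ p, ⟪(b' p : V), T e⟫_ℂ = 0 := fun p =>
      Submodule.inner_left_of_mem_orthogonal hTeK (SetLike.coe_mem (b' p))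
    have hb'on := b'.orthonormal
    rw [orthonormal_iff_ite] at hb'on
    have hbb : ∀ p q, ⟪(b' p : V), (b' q : V)⟫_ℂ = if p = q then 1 else 0 := by
      intro p q
      rw [← Submodule.coe_inner]
      exact hb'on p q
    have hong : Orthonormal ℂ g := by
      rw [orthonormal_iff_ite]
      rintro (i | i) (j | j) <;>
        rcases Fin.eq_zero_or_eq_succ i with rfl | ⟨i', rfl⟩ <;>
        rcases Fin.eq_zero_or_eq_succ j with rfl | ⟨j', rfl⟩ <;>
        simp [hg_def, hee, hTee, he1, hTe1, heTe, hTee0, hEb, hbE, hTb, hbT, hbb,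
          Fin.succ_ne_zero, (Fin.succ_ne_zero _).symm, Fin.succ_inj]
    have hcard : Fintype.card (Fin (m' + 1) ⊕ Fin (m' + 1)) = finrank ℂ V := by
      simp [hn]
      omega
    refine ⟨m' + 1, by rw [hn]; omega, ?_⟩
    refine ⟨(basisOfOrthonormalOfCardEqFinrank hong hcard).toOrthonormalBasis
      (by rwa [coe_basisOfOrthonormalOfCardEqFinrank]), ?_⟩
    have hcoe : ∀ p, ((basisOfOrthonormalOfCardEqFinrank hong hcard).toOrthonormalBasis
        (by rwa [coe_basisOfOrthonormalOfCardEqFinrank])) p = g p := by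
      intro p
      rw [Basis.coe_toOrthonormalBasis, coe_basisOfOrthonormalOfCardEqFinrank]
    intro i
    rw [hcoe, hcoe]
    rcases Fin.eq_zero_or_eq_succ i with rfl | ⟨i', rfl⟩
    · simp [hg_def]
    · simp only [hg_def, Sum.elim_inr, Sum.elim_inl, Fin.cases_succ]
      rw [hb' i']
      rfl

/-- For an anti-unitary operator `T` with `T² = -id` on a
finite-dimensional complex inner product space `V`, the dimension of `V` is
even, `dim V = 2m`, and there are vectors `e₁, …, e_m` such that
`(e₁, …, e_m, T e₁, …, T e_m)` is an orthonormal basis of `V`. -/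
theorem antiunitary_sq_neg_one_exists_quaternionic_onbasis
    {V : Type} [NormedAddCommGroup V] [InnerProductSpace ℂ V]
    [FiniteDimensional ℂ V]
    (T : V →ₗ⋆[ℂ] V) (hTbij : Function.Bijective T)
    (hTanti : ∀ v w : V, ⟪T v, T w⟫_ℂ = conj ⟪v, w⟫_ℂ)
    (hT2 : ∀ v : V, T (T v) = -v) :
    ∃ m : ℕ, Module.finrank ℂ V = 2 * m ∧
      ∃ b : OrthonormalBasis (Fin m ⊕ Fin m) ℂ V,
        ∀ i : Fin m, b (Sum.inr i) = T (b (Sum.inl i)) :=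
  antiunitary_aux (Module.finrank ℂ V) V rfl T hTbij hTanti hT2
end

section
/- Let N be a positive integer, let J be the 2N × 2N real matrix given in block form by J = [[0, 1_N], [-1_N, 0]], and let x be a unitary 2N × 2N complex matrix which is skew-symmetric, i.e. xᵀ = -x. Then there exists a unitary 2N × 2N complex matrix u such that x = u · J · uᵀ. (Consequently the Cartan embedding of U_{2N} / USp_{2N} is onto the set of skew-symmetric unitary matrices, up to the fixed skew unitary J.) -/
open Matrix

noncomputable section SkewAux

set_option linter.unusedSectionVars false

variable {n : Type*} [Fintype n] [DecidableEq n]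

/-- The antiunitary map `φ v = x ⬝ star v`. -/
def skewPhi (x : Matrix n n ℂ) (v : EuclideanSpace ℂ n) : EuclideanSpace ℂ n :=
  WithLp.toLp 2 (x.mulVec (star v))

lemma skewPhi_inner (x : Matrix n n ℂ) (h1 : star x * x = 1)
    (a b : EuclideanSpace ℂ n) :
    inner ℂ (skewPhi x a) (skewPhi x b) = (inner ℂ b a : ℂ) := by
  have lhs : (inner ℂ (skewPhi x a) (skewPhi x b) : ℂ)
      = star (x.mulVec (star a)) ⬝ᵥ (x.mulVec (star b)) := by
    simp [PiLp.inner_apply, skewPhi, dotProduct, mul_comm]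
  rw [lhs, star_mulVec, star_star, dotProduct_mulVec, vecMul_vecMul]
  have : xᴴ * x = 1 := h1
  rw [this, vecMul_one]
  rw [PiLp.inner_apply]
  simp [dotProduct, mul_comm]

lemma skewPhi_skewPhi (x : Matrix n n ℂ) (h2 : x * x.map (starRingEnd ℂ) = -1)
    (v : EuclideanSpace ℂ n) : skewPhi x (skewPhi x v) = -v := by
  have key : star (x.mulVec (star v)) = (x.map (starRingEnd ℂ)).mulVec v := by
    funext i
    simp [mulVec, dotProduct, map_sum, mul_comm]
  show WithLp.toLp 2 (x.mulVec (star (x.mulVec (star v.ofLp)))) = -v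
  rw [key, mulVec_mulVec, h2]
  ext i
  simp [mulVec, dotProduct, one_apply, Finset.sum_ite_eq]

lemma skewPhi_neg (x : Matrix n n ℂ) (v : EuclideanSpace ℂ n) :
    skewPhi x (-v) = -skewPhi x v := by
  show WithLp.toLp 2 (x.mulVec (star (-v).ofLp)) = -WithLp.toLp 2 (x.mulVec (star v.ofLp))
  rw [WithLp.ofLp_neg, star_neg, mulVec_neg, WithLp.toLp_neg]

lemma skewPhi_inner_anti (x : Matrix n n ℂ) (h1 : star x * x = 1)
    (h2 : x * x.map (starRingEnd ℂ) = -1) (a b : EuclideanSpace ℂ n) :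
    (inner ℂ (skewPhi x a) b : ℂ) = -(inner ℂ (skewPhi x b) a : ℂ) := by
  calc (inner ℂ (skewPhi x a) b : ℂ)
      = inner ℂ (skewPhi x a) (-(skewPhi x (skewPhi x b))) := by
        rw [skewPhi_skewPhi x h2 b, neg_neg]
    _ = -(inner ℂ (skewPhi x a) (skewPhi x (skewPhi x b)) : ℂ) := inner_neg_right _ _
    _ = -(inner ℂ (skewPhi x b) a : ℂ) := by rw [skewPhi_inner x h1]

/-- Inductive construction of an orthonormal family `e` with
`⟪φ (e i), e j⟫ = 0` for all `i j`. -/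
lemma skew_family (x : Matrix n n ℂ) (h1 : star x * x = 1)
    (h2 : x * x.map (starRingEnd ℂ) = -1) :
    ∀ k : ℕ, 2 * k ≤ Module.finrank ℂ (EuclideanSpace ℂ n) →
      ∃ e : Fin k → EuclideanSpace ℂ n, Orthonormal ℂ e ∧
        ∀ i j, (inner ℂ (skewPhi x (e i)) (e j) : ℂ) = 0 := by
  intro k
  induction k with
  | zero =>
    intro _
    exact ⟨Fin.elim0, orthonormal_iff_ite.mpr (fun i => i.elim0), fun i => i.elim0⟩
  | succ k ih =>
    intro hk
    obtain ⟨e, he, hphi⟩ := ih (by omega)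
    set g : Fin k ⊕ Fin k → EuclideanSpace ℂ n := Sum.elim e (fun i => skewPhi x (e i)) with hg
    set S : Submodule ℂ (EuclideanSpace ℂ n) := Submodule.span ℂ (Set.range g) with hS
    have hgS : ∀ i, g i ∈ S := fun i => Submodule.subset_span ⟨i, rfl⟩
    have hrank : Module.finrank ℂ S < Module.finrank ℂ (EuclideanSpace ℂ n) := by
      have h3 : Module.finrank ℂ S ≤ Fintype.card (Fin k ⊕ Fin k) :=
        finrank_range_le_card (R := ℂ) g
      have hcard : Fintype.card (Fin k ⊕ Fin k) = 2 * k := by simp [two_mul]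
      omega
    have hSne : S ≠ ⊤ := by
      intro h
      rw [h, finrank_top] at hrank
      omega
    have hbot : Sᗮ ≠ ⊥ := fun h => hSne (Submodule.orthogonal_eq_bot_iff.mp h)
    obtain ⟨w, hwS, hw0⟩ := Submodule.exists_mem_ne_zero_of_ne_bot hbot
    set w' : EuclideanSpace ℂ n := (‖w‖ : ℂ)⁻¹ • w with hw'
    have hw'S : w' ∈ Sᗮ := Submodule.smul_mem _ _ hwS
    have hnorm : ‖w'‖ = 1 := by
      rw [hw', norm_smul]
      simp [norm_ne_zero_iff.mpr hw0]
    have horthS : ∀ v ∈ S, (inner ℂ v w' : ℂ) = 0 := fun v hv =>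
      (Submodule.mem_orthogonal S w').mp hw'S v hv
    have horthS' : ∀ v ∈ S, (inner ℂ w' v : ℂ) = 0 := fun v hv => by
      rw [← inner_conj_symm, horthS v hv, map_zero]
    have hphiself : ∀ v : EuclideanSpace ℂ n, (inner ℂ (skewPhi x v) v : ℂ) = 0 := by
      intro v
      have := skewPhi_inner_anti x h1 h2 v v
      linear_combination this/2
    refine ⟨Fin.snoc e w', ?_, ?_⟩
    · rw [orthonormal_iff_ite]
      intro i j
      refine Fin.lastCases ?_ ?_ i
      · refine Fin.lastCases ?_ ?_ j
        · simp [inner_self_eq_norm_sq_to_K, hnorm]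
        · intro j
          simp only [Fin.snoc_last, Fin.snoc_castSucc]
          rw [horthS' (e j) (hgS (Sum.inl j))]
          simp [(Fin.castSucc_lt_last j).ne']
      · intro i
        refine Fin.lastCases ?_ ?_ j
        · simp only [Fin.snoc_last, Fin.snoc_castSucc]
          rw [horthS (e i) (hgS (Sum.inl i))]
          simp [(Fin.castSucc_lt_last i).ne]
        · intro j
          simp only [Fin.snoc_castSucc]
          rw [orthonormal_iff_ite.mp he i j]
          simp [Fin.castSucc_inj]
    · intro i j
      refine Fin.lastCases ?_ ?_ i
      · refine Fin.lastCases ?_ ?_ j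
        · simp only [Fin.snoc_last]
          exact hphiself w'
        · intro j
          simp only [Fin.snoc_last, Fin.snoc_castSucc]
          rw [skewPhi_inner_anti x h1 h2, horthS (skewPhi x (e j)) (hgS (Sum.inr j)), neg_zero]
      · intro i
        refine Fin.lastCases ?_ ?_ j
        · simp only [Fin.snoc_last, Fin.snoc_castSucc]
          exact horthS (skewPhi x (e i)) (hgS (Sum.inr i))
        · intro j
          simp only [Fin.snoc_castSucc]
          exact hphi i j

end SkewAux

/-- Every skew-symmetric unitary `2N × 2N` matrix `x`
factors as `x = u · J · uᵀ` with `u` unitary, where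
`J = [[0, 1], [-1, 0]]` is the standard symplectic form matrix
(surjectivity of the Cartan embedding of `U_{2N}/USp_{2N}`). -/
theorem skew_unitary_eq_u_mul_J_mul_u_transpose
    {N : ℕ} (hN : 0 < N)
    (J : Matrix (Fin N ⊕ Fin N) (Fin N ⊕ Fin N) ℂ)
    (hJ : J = Matrix.fromBlocks 0 1 (-1) 0)
    (x : Matrix (Fin N ⊕ Fin N) (Fin N ⊕ Fin N) ℂ)
    (hx : x ∈ Matrix.unitaryGroup (Fin N ⊕ Fin N) ℂ)
    (hskew : xᵀ = -x) :
    ∃ u ∈ Matrix.unitaryGroup (Fin N ⊕ Fin N) ℂ, x = u * J * uᵀ := by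
  classical
  have h1 : star x * x = 1 := mem_unitaryGroup_iff'.mp hx
  have hstar : star x = -(x.map (starRingEnd ℂ)) := by
    ext i j
    have hsk := congrFun (congrFun hskew i) j
    simp only [Matrix.transpose_apply, Matrix.neg_apply] at hsk
    show (star (x j i) : ℂ) = -(starRingEnd ℂ (x i j))
    rw [hsk]
    simp
  have h2 : x * x.map (starRingEnd ℂ) = -1 := by
    have hxx : x * star x = 1 := mem_unitaryGroup_iff.mp hx
    rw [hstar, mul_neg] at hxx
    rw [← neg_neg (x * x.map (starRingEnd ℂ)), hxx]
  have hfr : Module.finrank ℂ (EuclideanSpace ℂ (Fin N ⊕ Fin N)) = N + N := by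
    rw [finrank_euclideanSpace]
    simp
  obtain ⟨e, he, hphi⟩ := skew_family x h1 h2 N (by omega)
  set c : Fin N ⊕ Fin N → EuclideanSpace ℂ (Fin N ⊕ Fin N) :=
    Sum.elim e (fun i => -skewPhi x (e i)) with hcdef
  set u : Matrix (Fin N ⊕ Fin N) (Fin N ⊕ Fin N) ℂ :=
    Matrix.of (fun i j => c j i) with hudef
  have hee := orthonormal_iff_ite.mp he
  have hc : ∀ a b, (inner ℂ (c a) (c b) : ℂ) = if a = b then 1 else 0 := by
    intro a b
    cases a with
    | inl i =>
      cases b with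
      | inl j => simpa [hcdef] using hee i j
      | inr j =>
        simp only [hcdef, Sum.elim_inl, Sum.elim_inr, inner_neg_right]
        rw [← inner_conj_symm, hphi j i]
        simp
    | inr i =>
      cases b with
      | inl j =>
        simp only [hcdef, Sum.elim_inl, Sum.elim_inr, inner_neg_left]
        rw [hphi i j]
        simp
      | inr j =>
        simp only [hcdef, Sum.elim_inr, inner_neg_neg]
        rw [skewPhi_inner x h1, hee j i]
        simp [eq_comm]
  have humem : u ∈ Matrix.unitaryGroup (Fin N ⊕ Fin N) ℂ := by
    rw [mem_unitaryGroup_iff']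
    ext a b
    have hcab := hc a b
    rw [PiLp.inner_apply] at hcab
    simp only [Matrix.mul_apply, Matrix.one_apply, Matrix.star_apply, hudef, Matrix.of_apply]
    simpa [RCLike.inner_apply, mul_comm] using hcab
  have hkey : x * u.map (starRingEnd ℂ) = u * J := by
    ext a b
    have hlhs : (x * u.map (starRingEnd ℂ)) a b = skewPhi x (c b) a := by
      simp only [Matrix.mul_apply, Matrix.map_apply, hudef, Matrix.of_apply]
      simp [skewPhi, mulVec, dotProduct]
    rw [hlhs]
    cases b with
    | inl j =>
      have hrhs : (u * J) a (Sum.inl j)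
          = -(c (Sum.inr j) a) := by
        simp only [hJ, Matrix.mul_apply, Fintype.sum_sum_type]
        simp [Matrix.fromBlocks, hudef, Matrix.one_apply, Finset.sum_ite_eq']
      rw [hrhs]
      show skewPhi x (c (Sum.inl j)) a = -(c (Sum.inr j) a)
      simp [hcdef]
    | inr j =>
      have hrhs : (u * J) a (Sum.inr j)
          = c (Sum.inl j) a := by
        simp only [hJ, Matrix.mul_apply, Fintype.sum_sum_type]
        simp [Matrix.fromBlocks, hudef, Matrix.one_apply, Finset.sum_ite_eq']
      rw [hrhs]
      show skewPhi x (c (Sum.inr j)) a = c (Sum.inl j) a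
      have : skewPhi x (c (Sum.inr j)) = e j := by
        simp only [hcdef, Sum.elim_inr]
        rw [skewPhi_neg, skewPhi_skewPhi x h2, neg_neg]
      rw [this]
      simp [hcdef]
  refine ⟨u, humem, ?_⟩
  have huu : u * star u = 1 := mem_unitaryGroup_iff.mp humem
  have h4 : u.map (starRingEnd ℂ) * uᵀ = 1 := by
    have hmap := congrArg (fun M => M.map (starRingEnd ℂ)) huu
    simp only [Matrix.map_mul] at hmap
    have hstaru : (star u).map (starRingEnd ℂ) = uᵀ := by
      ext i j
      simp [Matrix.star_apply]
    have hone : (1 : Matrix (Fin N ⊕ Fin N) (Fin N ⊕ Fin N) ℂ).map (starRingEnd ℂ) = 1 := by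
      ext i j
      simp [Matrix.one_apply, apply_ite (starRingEnd ℂ)]
    rw [hstaru, hone] at hmap
    exact hmap
  calc x = x * (u.map (starRingEnd ℂ) * uᵀ) := by rw [h4, mul_one]
    _ = (x * u.map (starRingEnd ℂ)) * uᵀ := by rw [mul_assoc]
    _ = (u * J) * uᵀ := by rw [hkey]
end
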